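/- Let F = [f₁,…,f_k] be a Parseval tight frame (bound b = 1) in ℂⁿ and let I ⊆ {1,…,k}. Let Q_I be the orthogonal projection of ℂᵏ onto span{e_i : i ∈ I}. If F*F commutes with Q_I, then there exists a subspace V ⊆ ℂⁿ such that (fᵢ)_{i∈I} is a Parseval tight frame for V and (fᵢ)_{i∈I^c} is a Parseval tight frame for the orthogonal complement V^⊥. -/

import Mathlib

/-- If `F` is a Parseval tight frame in `ℂⁿ` and the Gram matrix `Fᴴ F` commutes
with the coordinate projection `Q_I`, then the frame splits orthogonally: the vectors
indexed by `I` form a Parseval frame for a subspace `V` and those indexed by `Iᶜ`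
form a Parseval frame for `Vᗮ`. -/
theorem stmt2 (n k : ℕ) (f : Fin k → EuclideanSpace ℂ (Fin n))
    (hframe : ∀ v : EuclideanSpace ℂ (Fin n),
      ‖v‖ ^ 2 = ∑ i : Fin k, ‖(inner ℂ v (f i) : ℂ)‖ ^ 2)
    (F : Matrix (Fin n) (Fin k) ℂ) (hF : ∀ i j, F j i = f i j)
    (I : Finset (Fin k))
    (Q : Matrix (Fin k) (Fin k) ℂ)
    (hQ : Q = Matrix.diagonal (fun i => if i ∈ I then (1 : ℂ) else 0))
    (hcomm : (F.conjTranspose * F) * Q = Q * (F.conjTranspose * F)) :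
    ∃ V : Submodule ℂ (EuclideanSpace ℂ (Fin n)),
      (∀ i ∈ I, f i ∈ V) ∧ (∀ i ∉ I, f i ∈ Vᗮ) ∧
      (∀ v ∈ V, ‖v‖ ^ 2 = ∑ i ∈ I, ‖(inner ℂ v (f i) : ℂ)‖ ^ 2) ∧
      (∀ v ∈ Vᗮ, ‖v‖ ^ 2 = ∑ i ∈ Iᶜ, ‖(inner ℂ v (f i) : ℂ)‖ ^ 2) := by
  subst hQ
  -- Orthogonality of the two groups of vectors
  have horth : ∀ i ∈ I, ∀ j ∉ I, (inner ℂ (f i) (f j) : ℂ) = 0 := by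
    intro i hi j hj
    have h := congrFun (congrFun hcomm i) j
    rw [Matrix.mul_diagonal, Matrix.diagonal_mul] at h
    simp only [hi, hj, if_true, if_false, mul_zero, one_mul] at h
    have hG : (inner ℂ (f i) (f j) : ℂ) = (F.conjTranspose * F) i j := by
      simp [Matrix.mul_apply, Matrix.conjTranspose_apply, PiLp.inner_apply,
        RCLike.inner_apply, hF, mul_comm]
    rw [hG, ← h]
  set V : Submodule ℂ (EuclideanSpace ℂ (Fin n)) :=
    Submodule.span ℂ (f '' (I : Set (Fin k))) with hV
  have hmemV : ∀ i ∈ I, f i ∈ V := fun i hi =>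
    Submodule.subset_span ⟨i, by simpa using hi, rfl⟩
  have hmemVp : ∀ j ∉ I, f j ∈ Vᗮ := by
    intro j hj
    rw [Submodule.mem_orthogonal]
    intro u hu
    induction hu using Submodule.span_induction with
    | mem x hx =>
      obtain ⟨i, hi, rfl⟩ := hx
      exact horth i (by simpa using hi) j hj
    | zero => simp
    | add u w _ _ hu hw => rw [inner_add_left, hu, hw, add_zero]
    | smul c u _ hu => rw [inner_smul_left, hu, mul_zero]
  refine ⟨V, hmemV, hmemVp, ?_, ?_⟩
  · intro v hv
    rw [hframe v, ← Finset.sum_add_sum_compl I]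
    have : ∀ i ∈ Iᶜ, ‖(inner ℂ v (f i) : ℂ)‖ ^ 2 = 0 := by
      intro i hi
      rw [Submodule.inner_right_of_mem_orthogonal hv (hmemVp i (by simpa using hi))]
      simp
    rw [Finset.sum_eq_zero this, add_zero]
  · intro v hv
    rw [hframe v, ← Finset.sum_add_sum_compl I]
    have : ∀ i ∈ I, ‖(inner ℂ v (f i) : ℂ)‖ ^ 2 = 0 := by
      intro i hi
      rw [Submodule.inner_left_of_mem_orthogonal (hmemV i hi) hv]
      simp
    rw [Finset.sum_eq_zero this, zero_add]
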